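/- Let n ≥ 1 be an integer, δ ∈ ℝ, α ∈ [0, 1], and κ > 0. Then there exists d₀ > 0 such that for every d ≥ d₀ the function g(r) = r^d · exp(δ r^α), defined for r > 0, satisfies g''(r) + ((n − 1)/r)·g'(r) + κ·g(r) ≥ 0 for all r > 0. -/

import Mathlib

set_option maxHeartbeats 4000000 in
lemma aux_hasDerivAt (δ α a : ℝ) {s : ℝ} (hs : 0 < s) :
    HasDerivAt (fun x : ℝ => x ^ a * Real.exp (δ * x ^ α))
      ((a * s ^ (a - 1) + δ * α * s ^ (α - 1) * s ^ a) * Real.exp (δ * s ^ α)) s := by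
  have hf : HasDerivAt (fun x : ℝ => x ^ a) (a * s ^ (a - 1)) s :=
    Real.hasDerivAt_rpow_const (Or.inl hs.ne')
  have hg : HasDerivAt (fun x : ℝ => δ * x ^ α) (δ * (α * s ^ (α - 1))) s :=
    (Real.hasDerivAt_rpow_const (Or.inl hs.ne')).const_mul δ
  have : HasDerivAt (fun x : ℝ => x ^ a * Real.exp (δ * x ^ α)) _ s := hf.mul hg.exp
  convert this using 1
  ring

set_option maxHeartbeats 4000000 in
theorem radial_supersolution (n : ℕ) (hn : 1 ≤ n) (δ : ℝ) (α : ℝ)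
    (hα : α ∈ Set.Icc (0 : ℝ) 1) (κ : ℝ) (hκ : 0 < κ) :
    ∃ d₀ > (0 : ℝ), ∀ d : ℝ, d₀ ≤ d → ∀ r : ℝ, 0 < r →
      0 ≤ deriv (deriv fun s : ℝ => s ^ d * Real.exp (δ * s ^ α)) r +
          ((n : ℝ) - 1) / r * deriv (fun s : ℝ => s ^ d * Real.exp (δ * s ^ α)) r +
          κ * (r ^ d * Real.exp (δ * r ^ α)) := by
  obtain ⟨hα0, hα1⟩ := hα
  have hn1 : (1 : ℝ) ≤ (n : ℝ) := by exact_mod_cast hn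
  refine ⟨2 * (n : ℝ) + 5 + 2 * |δ| + 4 * δ ^ 2 * ((n : ℝ) + 1) / κ, by positivity, ?_⟩
  intro d hd r hr
  have habs : (0 : ℝ) ≤ 2 * |δ| := by positivity
  have hdiv : (0 : ℝ) ≤ 4 * δ ^ 2 * ((n : ℝ) + 1) / κ := by positivity
  have hd7 : (7 : ℝ) ≤ d := by linarith
  have hdn : 2 * (n : ℝ) + 5 ≤ d := by linarith
  have hdabs : 2 * |δ| + 7 ≤ d := by linarith
  have hdk : 4 * δ ^ 2 * ((n : ℝ) + 1) ≤ κ * d := by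
    have h : 4 * δ ^ 2 * ((n : ℝ) + 1) / κ ≤ d := by linarith
    calc 4 * δ ^ 2 * ((n : ℝ) + 1) = 4 * δ ^ 2 * ((n : ℝ) + 1) / κ * κ := by
          field_simp
      _ ≤ d * κ := by
          exact mul_le_mul_of_nonneg_right h hκ.le
      _ = κ * d := by ring
  -- first derivative
  have Hg : deriv (fun s : ℝ => s ^ d * Real.exp (δ * s ^ α)) r
      = (d * r ^ (d - 1) + δ * α * r ^ (α - 1) * r ^ d) * Real.exp (δ * r ^ α) :=
    (aux_hasDerivAt δ α d hr).deriv
  -- second derivative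
  have Hev : (fun s : ℝ => d * (s ^ (d - 1) * Real.exp (δ * s ^ α))
        + δ * α * (s ^ (d + α - 1) * Real.exp (δ * s ^ α)))
      =ᶠ[nhds r] deriv (fun s : ℝ => s ^ d * Real.exp (δ * s ^ α)) := by
    filter_upwards [eventually_gt_nhds hr] with s hs
    rw [(aux_hasDerivAt δ α d hs).deriv, show d + α - 1 = (α - 1) + d by ring,
      Real.rpow_add hs]
    ring
  have Hg1 : HasDerivAt (fun s : ℝ => d * (s ^ (d - 1) * Real.exp (δ * s ^ α))
        + δ * α * (s ^ (d + α - 1) * Real.exp (δ * s ^ α)))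
      (d * ((d - 1) * r ^ (d - 1 - 1) + δ * α * r ^ (α - 1) * r ^ (d - 1)) *
          Real.exp (δ * r ^ α)
        + δ * α * ((d + α - 1) * r ^ (d + α - 1 - 1) + δ * α * r ^ (α - 1) * r ^ (d + α - 1)) *
          Real.exp (δ * r ^ α)) r := by
    have h1 := (aux_hasDerivAt δ α (d - 1) hr).const_mul d
    have h2 := (aux_hasDerivAt δ α (d + α - 1) hr).const_mul (δ * α)
    have h3 : HasDerivAt (fun s : ℝ => d * (s ^ (d - 1) * Real.exp (δ * s ^ α))
        + δ * α * (s ^ (d + α - 1) * Real.exp (δ * s ^ α))) _ r := h1.add h2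
    convert h3 using 1
    ring
  have H2 : deriv (deriv fun s : ℝ => s ^ d * Real.exp (δ * s ^ α)) r
      = d * ((d - 1) * r ^ (d - 1 - 1) + δ * α * r ^ (α - 1) * r ^ (d - 1)) *
          Real.exp (δ * r ^ α)
        + δ * α * ((d + α - 1) * r ^ (d + α - 1 - 1) + δ * α * r ^ (α - 1) * r ^ (d + α - 1)) *
          Real.exp (δ * r ^ α) := by
    rw [← Hev.deriv_eq]; exact Hg1.deriv
  rw [H2, Hg]
  -- rewrite powers
  have e2 : r ^ (d - 1 - 1) = r ^ d / r / r := by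
    rw [Real.rpow_sub hr, Real.rpow_sub hr, Real.rpow_one]
  have e5 : r ^ (d + α - 1 - 1) = r ^ d * r ^ α / r / r := by
    rw [Real.rpow_sub hr, Real.rpow_sub hr, Real.rpow_add hr, Real.rpow_one]
  have e1 : r ^ (d - 1) = r ^ d / r := by rw [Real.rpow_sub hr, Real.rpow_one]
  have e4 : r ^ (d + α - 1) = r ^ d * r ^ α / r := by
    rw [Real.rpow_sub hr, Real.rpow_add hr, Real.rpow_one]
  have e3 : r ^ (α - 1) = r ^ α / r := by rw [Real.rpow_sub hr, Real.rpow_one]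
  rw [e2, e5, e1, e4, e3]
  have hE : (0 : ℝ) < Real.exp (δ * r ^ α) := Real.exp_pos _
  have hA : (0 : ℝ) < r ^ d := Real.rpow_pos_of_pos hr d
  have hB : (0 : ℝ) < r ^ α := Real.rpow_pos_of_pos hr α
  -- the key quadratic inequality
  have hQ : 0 ≤ (d + δ * α * r ^ α) * (d + δ * α * r ^ α + ((n : ℝ) - 2))
      + α * (δ * α * r ^ α) + κ * (r * r) := by
    rcases le_or_gt (-(d / 2)) (δ * α * r ^ α) with hcase | hcase
    · have h3 : d / 2 ≤ d + δ * α * r ^ α := by linarith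
      have h4 : (5 : ℝ) / 2 ≤ d + δ * α * r ^ α + ((n : ℝ) - 2) := by linarith
      have h5 := mul_le_mul h3 h4 (by norm_num) (by linarith)
      have h6 : -(d / 2) ≤ α * (δ * α * r ^ α) := by
        rcases le_or_gt 0 (δ * α * r ^ α) with h | h
        · nlinarith
        · nlinarith
      nlinarith [mul_nonneg hκ.le (mul_self_nonneg r)]
    · have h1 : d / 2 < -(δ * α * r ^ α) := by linarith
      have h2 : d / 2 < |δ| * r ^ α := by
        have hδle : -δ ≤ |δ| := neg_le_abs δ
        nlinarith [mul_le_mul_of_nonneg_right hδle (mul_nonneg hα0 hB.le),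
          mul_le_mul_of_nonneg_left hα1 (mul_nonneg (abs_nonneg δ) hB.le)]
      have hδ : 0 < |δ| := by
        rcases (abs_nonneg δ).lt_or_eq with h | h
        · exact h
        · exfalso; nlinarith [h2]
      have hB1 : 1 < r ^ α := by
        have h : |δ| * 1 < |δ| * r ^ α := by nlinarith
        exact lt_of_mul_lt_mul_left h (abs_nonneg δ)
      have hr1 : 1 < r := by
        by_contra h
        push_neg at h
        have := Real.rpow_le_one hr.le h hα0
        linarith
      have hBle : r ^ α ≤ r := by
        calc r ^ α ≤ r ^ (1 : ℝ) := Real.rpow_le_rpow_of_exponent_le hr1.le hα1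
          _ = r := Real.rpow_one r
      have h3 : d < 2 * |δ| * r := by
        nlinarith [mul_le_mul_of_nonneg_left hBle (abs_nonneg δ)]
      have h7 : 2 * |δ| * ((n : ℝ) + 1) < κ * r := by
        have hstep : 2 * |δ| * (2 * |δ| * ((n : ℝ) + 1)) < 2 * |δ| * (κ * r) := by
          nlinarith [sq_abs δ, mul_lt_mul_of_pos_left h3 hκ]
        exact lt_of_mul_lt_mul_left hstep (by positivity)
      have hαα : α * α ≤ 1 := by nlinarith
      have hX1 : α * α * r ^ α ≤ r := by
        nlinarith [mul_le_mul_of_nonneg_right hαα hB.le]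
      have hX0 : 0 ≤ α * α * r ^ α := by positivity
      have hαt : -(|δ| * r) ≤ α * (δ * α * r ^ α) := by
        have heq : α * (δ * α * r ^ α) = δ * (α * α * r ^ α) := by ring
        rw [heq]
        rcases le_or_gt 0 δ with h | h
        · nlinarith [mul_nonneg (abs_nonneg δ) hr.le]
        · have habs' : |δ| = -δ := abs_of_neg h
          nlinarith
      have hprod := mul_lt_mul_of_pos_right h7 hr
      have hnd := mul_le_mul_of_nonneg_left h3.le (by positivity : (0 : ℝ) ≤ (n : ℝ))
      have hnd2 : (n : ℝ) * (2 * (n : ℝ) + 5) ≤ (n : ℝ) * d :=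
        mul_le_mul_of_nonneg_left hdn (by positivity)
      have hQ1 : -(((n : ℝ) - 2) ^ 2) / 4
          ≤ (d + δ * α * r ^ α) * (d + δ * α * r ^ α + ((n : ℝ) - 2)) := by
        nlinarith [sq_nonneg (2 * (d + δ * α * r ^ α) + ((n : ℝ) - 2))]
      linarith [hQ1, hαt, hprod, hnd, hnd2, h3, sq_nonneg ((n : ℝ)), sq_nonneg ((n : ℝ) - 2)]
  have key : 0 ≤ r ^ d * Real.exp (δ * r ^ α) / (r * r) *
      ((d + δ * α * r ^ α) * (d + δ * α * r ^ α + ((n : ℝ) - 2))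
        + α * (δ * α * r ^ α) + κ * (r * r)) :=
    mul_nonneg (by positivity) hQ
  convert key using 1
  field_simp
  ring
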